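/- arXiv:1103.4901 — 4 statements merged into one kernel-verified Lean document; each statement's English description precedes it below -/
import Mathlib

section
/- Let G be an infinite, connected, locally finite simplicial graph with vertex set V. Then the combinatorial Laplacian Δ_G : ℝ^V → ℝ^V, defined by Δ_G(f)(v) = f(v) - (1/deg(v)) · Σ_{w ∼ v} f(w), is surjective. -/
open SimpleGraph

noncomputable def lap {V : Type*} (G : SimpleGraph V) [G.LocallyFinite] (f : V → ℝ) (v : V) : ℝ :=
  f v - (1 / (G.degree v : ℝ)) * ∑ w ∈ G.neighborFinset v, f w

section aux

variable {V : Type*} [Infinite V] (G : SimpleGraph V) [G.LocallyFinite]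

lemma lap_degree_pos (hconn : G.Connected) (v : V) : 0 < G.degree v := by
  obtain ⟨u, hu⟩ := Infinite.exists_notMem_finset ({v} : Finset V)
  have hne : u ≠ v := by simpa using hu
  obtain ⟨p⟩ := hconn.preconnected v u
  cases p with
  | nil => exact absurd rfl hne
  | cons h _ => exact (G.degree_pos_iff_exists_adj v).mpr ⟨_, h⟩

/-- Maximum principle: a function vanishing off a finite set and harmonic on it is ≤ 0. -/
lemma lap_maxp (hconn : G.Connected) (S : Finset V) (y : V → ℝ)
    (h0 : ∀ v ∉ S, y v = 0)
    (heq : ∀ v ∈ S, (G.degree v : ℝ) * y v = ∑ w ∈ G.neighborFinset v, y w)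
    (v : V) : y v ≤ 0 := by
  by_contra hv
  push_neg at hv
  have hvS : v ∈ S := by
    by_contra h
    rw [h0 v h] at hv
    exact lt_irrefl _ hv
  obtain ⟨v₁, hv₁S, hmax⟩ := S.exists_max_image y ⟨v, hvS⟩
  set m := y v₁ with hm
  have hmpos : 0 < m := lt_of_lt_of_le hv (hmax v hvS)
  have hub : ∀ w, y w ≤ m := by
    intro w
    by_cases h : w ∈ S
    · exact hmax w h
    · rw [h0 w h]; exact le_of_lt hmpos
  have step : ∀ x, y x = m → ∀ w, G.Adj x w → y w = m := by
    intro x hx w hw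
    have hxS : x ∈ S := by
      by_contra h
      rw [h0 x h] at hx
      exact absurd hx.symm (ne_of_gt hmpos)
    by_contra hne
    have hlt' : y w < m := lt_of_le_of_ne (hub w) hne
    have hsum : ∑ w' ∈ G.neighborFinset x, y w' < ∑ w' ∈ G.neighborFinset x, m :=
      Finset.sum_lt_sum (fun i _ => hub i)
        ⟨w, by rw [SimpleGraph.mem_neighborFinset]; exact hw, hlt'⟩
    have hc : ∑ w' ∈ G.neighborFinset x, m = (G.degree x : ℝ) * m := by
      rw [Finset.sum_const, ← G.card_neighborFinset_eq_degree x, nsmul_eq_mul]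
    have h1 := heq x hxS
    rw [hx] at h1
    rw [hc] at hsum
    linarith
  obtain ⟨u, hu⟩ := Infinite.exists_notMem_finset S
  have prop : ∀ {a c : V} (_ : G.Walk a c), y a = m → y c = m := by
    intro a c p
    induction p with
    | nil => exact id
    | cons h q ih => intro ha; exact ih (step _ ha _ h)
  obtain ⟨p⟩ := hconn.preconnected v₁ u
  have := prop p rfl
  rw [h0 u hu] at this
  exact absurd this.symm (ne_of_gt hmpos)

/-- Every finite subsystem of the Laplace equations is solvable. -/
lemma lap_finsolv (hconn : G.Connected) (b : V → ℝ) (S : Finset V) :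
    ∃ f : V → ℝ, ∀ v ∈ S,
      (G.degree v : ℝ) * f v - ∑ w ∈ G.neighborFinset v, f w = b v := by
  classical
  let ext : (↥S → ℝ) →ₗ[ℝ] (V → ℝ) :=
    { toFun := fun x w => if h : w ∈ S then x ⟨w, h⟩ else 0
      map_add' := by
        intro x y; funext w; by_cases h : w ∈ S <;> simp [h]
      map_smul' := by
        intro c x; funext w; by_cases h : w ∈ S <;> simp [h] }
  let L : (↥S → ℝ) →ₗ[ℝ] (↥S → ℝ) :=
    { toFun := fun x v => (G.degree (v : V) : ℝ) * x v - ∑ w ∈ G.neighborFinset (v : V), ext x w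
      map_add' := by
        intro x y; funext v
        simp only [Pi.add_apply, map_add, Finset.sum_add_distrib]
        ring
      map_smul' := by
        intro c x; funext v
        simp only [Pi.smul_apply, map_smul, smul_eq_mul, RingHom.id_apply]
        rw [← Finset.mul_sum]
        ring }
  have hextS : ∀ (x : ↥S → ℝ) (v : V) (hv : v ∈ S), ext x v = x ⟨v, hv⟩ := by
    intro x v hv; exact dif_pos hv
  have hext0 : ∀ (x : ↥S → ℝ) (v : V), v ∉ S → ext x v = 0 := by
    intro x v hv; exact dif_neg hv
  have hinj : Function.Injective L := by
    rw [injective_iff_map_eq_zero]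
    intro x hx
    have heq : ∀ (z : ↥S → ℝ), L z = 0 →
        ∀ v ∈ S, (G.degree v : ℝ) * ext z v = ∑ w ∈ G.neighborFinset v, ext z w := by
      intro z hz v hv
      have h1 := congrFun hz ⟨v, hv⟩
      have h2 : (G.degree v : ℝ) * z ⟨v, hv⟩ - ∑ w ∈ G.neighborFinset v, ext z w = 0 := h1
      rw [hextS z v hv]
      linarith
    have hle := lap_maxp G hconn S (ext x) (hext0 x) (heq x hx)
    have hx' : L (-x) = 0 := by rw [map_neg, hx, neg_zero]
    have hge := lap_maxp G hconn S (ext (-x)) (hext0 (-x)) (heq (-x) hx')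
    funext v
    have h1 := hle (v : V)
    have h2 := hge (v : V)
    rw [map_neg] at h2
    have h3 : -(ext x) (v : V) ≤ 0 := h2
    have h4 : ext x (v : V) = x v := hextS x (v : V) v.2
    have : ext x (v : V) = 0 := le_antisymm h1 (by linarith)
    rw [h4] at this
    simpa using this
  have hsurj := LinearMap.injective_iff_surjective.mp hinj
  obtain ⟨x, hxb⟩ := hsurj (fun v => b v)
  refine ⟨ext x, fun v hv => ?_⟩
  have h1 := congrFun hxb ⟨v, hv⟩
  have h2 : (G.degree v : ℝ) * x ⟨v, hv⟩ - ∑ w ∈ G.neighborFinset v, ext x w = b v := h1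
  rw [hextS x v hv]
  exact h2

end aux

theorem stmt0 {V : Type*} [Infinite V] (G : SimpleGraph V) [G.LocallyFinite]
    (hconn : G.Connected) : Function.Surjective (lap G) := by
  intro g
  classical
  have hdeg : ∀ v, 0 < G.degree v := lap_degree_pos G hconn
  set b : V → ℝ := fun v => (G.degree v : ℝ) * g v with hb
  set a : V → (V →₀ ℝ) := fun v =>
    Finsupp.single v (G.degree v : ℝ) - ∑ w ∈ G.neighborFinset v, Finsupp.single w (1 : ℝ)
    with ha
  set Ta : (V →₀ ℝ) →ₗ[ℝ] (V →₀ ℝ) := Finsupp.linearCombination ℝ a with hTa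
  set Tb : (V →₀ ℝ) →ₗ[ℝ] ℝ := Finsupp.linearCombination ℝ b with hTb
  have hpair : ∀ (f : V → ℝ) (v : V),
      Finsupp.linearCombination ℝ f (a v)
        = (G.degree v : ℝ) * f v - ∑ w ∈ G.neighborFinset v, f w := by
    intro f v
    rw [ha]
    simp only [map_sub, map_sum, Finsupp.linearCombination_single, smul_eq_mul, one_mul]
  have key : ∀ (f : V → ℝ) (c : V →₀ ℝ),
      Finsupp.linearCombination ℝ f (Ta c)
        = c.sum (fun v cv => cv * ((G.degree v : ℝ) * f v - ∑ w ∈ G.neighborFinset v, f w)) := by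
    intro f c
    have hTac : Ta c = c.sum fun v cv => cv • a v := by
      rw [hTa, Finsupp.linearCombination_apply]
    rw [hTac, map_finsuppSum]
    refine Finsupp.sum_congr (fun v _ => ?_)
    rw [map_smul, hpair f v, smul_eq_mul]
  have hker : LinearMap.ker Ta ≤ LinearMap.ker Tb := by
    intro c hc
    rw [LinearMap.mem_ker] at hc ⊢
    obtain ⟨f, hf⟩ := lap_finsolv G hconn b c.support
    have h1 := key f c
    rw [hc, map_zero] at h1
    have h2 : Tb c = c.sum fun v cv => cv * b v := by
      rw [hTb, Finsupp.linearCombination_apply]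
      exact Finsupp.sum_congr (fun v _ => by rw [smul_eq_mul])
    rw [h2]
    rw [Finsupp.sum] at h1 ⊢
    rw [← h1.symm]
    exact (Finset.sum_congr rfl (fun v hv => by rw [hf v hv])).symm
  let ψ : ((V →₀ ℝ) ⧸ LinearMap.ker Ta) →ₗ[ℝ] ℝ := Submodule.liftQ _ Tb hker
  let e := LinearMap.quotKerEquivRange Ta
  let φ₀ : LinearMap.range Ta →ₗ[ℝ] ℝ := ψ ∘ₗ e.symm.toLinearMap
  obtain ⟨φ, hφ⟩ := LinearMap.exists_extend φ₀
  have hφa : ∀ c : V →₀ ℝ, φ (Ta c) = Tb c := by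
    intro c
    have h1 : e (Submodule.Quotient.mk c) = ⟨Ta c, LinearMap.mem_range_self Ta c⟩ := by
      apply Subtype.ext
      exact LinearMap.quotKerEquivRange_apply_mk Ta c
    have h2 : e.symm ⟨Ta c, LinearMap.mem_range_self Ta c⟩ = Submodule.Quotient.mk c := by
      rw [← h1, e.symm_apply_apply]
    have h3 : φ (Ta c) = φ₀ ⟨Ta c, LinearMap.mem_range_self Ta c⟩ := by
      rw [← hφ]; rfl
    rw [h3]
    show ψ (e.symm ⟨Ta c, LinearMap.mem_range_self Ta c⟩) = Tb c
    rw [h2]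
    exact Submodule.liftQ_apply _ _ _
  set f : V → ℝ := fun w => φ (Finsupp.single w 1) with hfdef
  refine ⟨f, ?_⟩
  funext v
  have h3 : φ (a v) = b v := by
    have hav : a v = Ta (Finsupp.single v (1 : ℝ)) := by
      rw [hTa]; rw [Finsupp.linearCombination_single, one_smul]
    rw [hav, hφa, hTb, Finsupp.linearCombination_single, one_smul]
  have h4 : φ (a v) = (G.degree v : ℝ) * f v - ∑ w ∈ G.neighborFinset v, f w := by
    rw [ha]
    simp only [map_sub, map_sum]
    congr 1
    have : (Finsupp.single v (G.degree v : ℝ)) = (G.degree v : ℝ) • Finsupp.single v (1 : ℝ) := by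
      rw [Finsupp.smul_single, smul_eq_mul, mul_one]
    rw [this, map_smul, smul_eq_mul]
  have hd : (G.degree v : ℝ) ≠ 0 := by
    exact_mod_cast (hdeg v).ne'
  have h5 : (G.degree v : ℝ) * f v - ∑ w ∈ G.neighborFinset v, f w = (G.degree v : ℝ) * g v := by
    rw [← h4, h3, hb]
  have h6 : ∑ w ∈ G.neighborFinset v, f w = (G.degree v : ℝ) * (f v - g v) := by linarith
  unfold lap
  rw [h6]
  field_simp
  ring
end

section
/- Let G be a connected locally finite simplicial graph with vertex set V. Then the image Δ_G(ℝ^V) of the combinatorial Laplacian is closed in ℝ^V with respect to the prodiscrete topology (the product topology where each factor ℝ carries the discrete topology). -/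
open SimpleGraph

section Helpers
variable {V : Type*} [DecidableEq V] (G : SimpleGraph V) [G.LocallyFinite] (e : ℕ → V)

lemma lap_add (f h : V → ℝ) (v : V) : lap G (f + h) v = lap G f v + lap G h v := by
  simp [lap, Finset.sum_add_distrib, mul_add]; ring

lemma lap_smul (c : ℝ) (f : V → ℝ) (v : V) : lap G (c • f) v = c * lap G f v := by
  simp only [lap, Pi.smul_apply, smul_eq_mul, Finset.mul_sum, mul_sub]
  congr 1
  exact Finset.sum_congr rfl fun x _ => by ring

lemma lap_congr (f h : V → ℝ) (v : V)
    (hfh : ∀ w ∈ insert v (G.neighborFinset v), f w = h w) : lap G f v = lap G h v := by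
  unfold lap
  rw [hfh v (Finset.mem_insert_self _ _)]
  congr 1
  rw [Finset.sum_congr rfl (fun w hw => hfh w (Finset.mem_insert_of_mem hw))]

/-- The Laplacian restricted to a finite set of vertices, as a linear map. -/
noncomputable def Lmap (S : Finset V) : (V → ℝ) →ₗ[ℝ] (↥S → ℝ) where
  toFun f := fun v => lap G f (v : V)
  map_add' f h := funext fun v => lap_add G f h v
  map_smul' c f := funext fun v => lap_smul G c f v

/-- Restriction of functions to a finite set of vertices. -/
noncomputable def piR (S : Finset V) : (V → ℝ) →ₗ[ℝ] (↥S → ℝ) :=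
  LinearMap.funLeft ℝ ℝ Subtype.val

def Fn (n : ℕ) : Finset V := (Finset.range n).image e

def Cn (n : ℕ) : Finset V :=
  (Fn e n).biUnion (fun v => insert v (G.neighborFinset v))

lemma Fn_mono {n m : ℕ} (h : n ≤ m) : Fn e n ⊆ Fn e m :=
  Finset.image_subset_image (Finset.range_subset_range.mpr h)

lemma Cn_mono {n m : ℕ} (h : n ≤ m) : Cn G e n ⊆ Cn G e m :=
  Finset.biUnion_subset_biUnion_of_subset_left _ (Fn_mono e h)

lemma ball_subset_Cn {n : ℕ} {v : V} (hv : v ∈ Fn e n) :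
    insert v (G.neighborFinset v) ⊆ Cn G e n :=
  show insert v (G.neighborFinset v) ⊆ (Fn e n).biUnion (fun v => insert v (G.neighborFinset v))
    from Finset.subset_biUnion_of_mem (fun w => insert w (G.neighborFinset w)) hv

lemma Fn_subset_Cn {n : ℕ} : Fn e n ⊆ Cn G e n :=
  fun v hv => ball_subset_Cn G e hv (Finset.mem_insert_self _ _)

end Helpers

/-- coset characterization of the image of a preimage under linear maps -/
lemma coset_char {E F D : Type*} [AddCommGroup E] [Module ℝ E] [AddCommGroup F] [Module ℝ F]
    [AddCommGroup D] [Module ℝ D] (π : E →ₗ[ℝ] F) (L : E →ₗ[ℝ] D) (p : D) (f0 : E)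
    (hf0 : L f0 = p) :
    π '' (L ⁻¹' {p}) = {y | y - π f0 ∈ (LinearMap.ker L).map π} := by
  ext y
  constructor
  · rintro ⟨f, hf, rfl⟩
    refine ⟨f - f0, ?_, by rw [map_sub]⟩
    rw [Set.mem_preimage, Set.mem_singleton_iff] at hf
    simp only [SetLike.mem_coe, LinearMap.mem_ker, map_sub, hf, hf0, sub_self]
  · rintro ⟨k, hk, hky⟩
    refine ⟨f0 + k, ?_, ?_⟩
    · rw [Set.mem_preimage, Set.mem_singleton_iff, map_add, hf0,
        LinearMap.mem_ker.mp hk, add_zero]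
    · rw [map_add, hky, add_sub_cancel]

lemma submodule_stab {E : Type*} [AddCommGroup E] [Module ℝ E] [FiniteDimensional ℝ E]
    (W : ℕ → Submodule ℝ E) (hW : ∀ m, W (m + 1) ≤ W m) :
    ∃ M, ∀ m ≥ M, W m = W M := by
  have hanti : ∀ {a b : ℕ}, a ≤ b → W b ≤ W a := by
    intro a b hab
    induction hab with
    | refl => exact le_rfl
    | step _ ih => exact le_trans (hW _) ih
  have hne : (Set.range fun m => Module.finrank ℝ (W m)).Nonempty := ⟨_, ⟨0, rfl⟩⟩
  obtain ⟨M, hM⟩ := Nat.sInf_mem hne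
  refine ⟨M, fun m hm => ?_⟩
  refine Submodule.eq_of_le_of_finrank_le (hanti hm) ?_
  calc Module.finrank ℝ (W M) = _ := hM
    _ ≤ _ := Nat.sInf_le ⟨m, rfl⟩

lemma main_lemma {V : Type*} (G : SimpleGraph V) [G.LocallyFinite] [Countable V]
    [DecidableEq V] (g : V → ℝ)
    (hloc : ∀ F : Finset V, ∃ f : V → ℝ, ∀ v ∈ F, lap G f v = g v) :
    ∃ f : V → ℝ, lap G f = g := by
  classical
  by_cases hV : Nonempty V
  swap
  · exact ⟨g, funext fun v => ((hV ⟨v⟩).elim)⟩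
  obtain ⟨e, he⟩ := exists_surjective_nat V
  -- solutions f0 m on Fn e m
  have hsol : ∀ m : ℕ, ∃ f : V → ℝ, Lmap G (Fn e m) f = fun v : ↥(Fn e m) => g v.1 := by
    intro m
    obtain ⟨f, hf⟩ := hloc (Fn e m)
    exact ⟨f, funext fun v => hf v.1 v.2⟩
  choose f0 hf0 using hsol
  -- the restricted solution sets and their directions
  let T : (n : ℕ) → ℕ → Set ((↥(Cn G e n)) → ℝ) := fun n m =>
    piR (Cn G e n) '' ((Lmap G (Fn e m)) ⁻¹' {fun v : ↥(Fn e m) => g v.1})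
  let W : (n : ℕ) → ℕ → Submodule ℝ ((↥(Cn G e n)) → ℝ) := fun n m =>
    (LinearMap.ker (Lmap G (Fn e m))).map (piR (Cn G e n))
  have hker : ∀ {m m' : ℕ}, m ≤ m' →
      LinearMap.ker (Lmap G (Fn e m')) ≤ LinearMap.ker (Lmap G (Fn e m)) := by
    intro m m' h f hf
    rw [LinearMap.mem_ker] at hf ⊢
    funext v
    exact congrFun hf ⟨v.1, Fn_mono e h v.2⟩
  have hTcoset : ∀ n m, T n m = {y | y - piR (Cn G e n) (f0 m) ∈ W n m} :=
    fun n m => coset_char (piR (Cn G e n)) (Lmap G (Fn e m)) _ (f0 m) (hf0 m)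
  have hTne : ∀ n m, (T n m).Nonempty :=
    fun n m => ⟨piR (Cn G e n) (f0 m), f0 m, hf0 m, rfl⟩
  have hTsub : ∀ n {m m' : ℕ}, m ≤ m' → T n m' ⊆ T n m := by
    rintro n m m' h y ⟨f, hf, rfl⟩
    refine ⟨f, ?_, rfl⟩
    rw [Set.mem_preimage, Set.mem_singleton_iff] at hf ⊢
    funext v
    exact congrFun hf ⟨v.1, Fn_mono e h v.2⟩
  have hWsub : ∀ n m, W n (m + 1) ≤ W n m :=
    fun n m => Submodule.map_mono (hker (Nat.le_succ m))
  have hstab : ∀ n, ∃ M, ∀ m ≥ M, W n m = W n M := fun n => submodule_stab _ (hWsub n)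
  choose M hM using hstab
  have hTeq : ∀ n m, M n ≤ m → T n m = T n (M n) := by
    intro n m hm
    refine Set.Subset.antisymm (hTsub n hm) ?_
    intro z hz
    rw [hTcoset n m]
    rw [hTcoset n (M n)] at hz
    have h1 : piR (Cn G e n) (f0 m) ∈ T n (M n) := hTsub n hm ⟨f0 m, hf0 m, rfl⟩
    rw [hTcoset n (M n)] at h1
    rw [Set.mem_setOf_eq] at hz h1 ⊢
    have heq : z - piR (Cn G e n) (f0 m) =
        (z - piR (Cn G e n) (f0 (M n))) - (piR (Cn G e n) (f0 m) - piR (Cn G e n) (f0 (M n))) := by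
      abel
    rw [heq, hM n m hm]
    exact Submodule.sub_mem _ hz h1
  -- the one-step extension property
  have hstep : ∀ (n : ℕ) (x : (↥(Cn G e n)) → ℝ), x ∈ T n (M n) →
      ∃ z, z ∈ T (n + 1) (M (n + 1)) ∧
        ∀ v : ↥(Cn G e n), z ⟨v.1, Cn_mono G e (Nat.le_succ n) v.2⟩ = x v := by
    intro n x hx
    rw [← hTeq n (max (M n) (M (n + 1))) (le_max_left _ _)] at hx
    obtain ⟨f, hf, rfl⟩ := hx
    refine ⟨piR (Cn G e (n + 1)) f, ?_, fun v => rfl⟩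
    rw [← hTeq (n + 1) (max (M n) (M (n + 1))) (le_max_right _ _)]
    exact ⟨f, hf, rfl⟩
  choose y hy1 hy2 using hstep
  have hB0 : ∃ x, x ∈ T 0 (M 0) := hTne 0 (M 0)
  let X : (n : ℕ) → {x : (↥(Cn G e n)) → ℝ // x ∈ T n (M n)} := fun n =>
    Nat.rec ⟨hB0.choose, hB0.choose_spec⟩ (fun k p => ⟨y k p.1 p.2, hy1 k p.1 p.2⟩) n
  have hXcompat : ∀ (n : ℕ) (v : ↥(Cn G e n)),
      (X (n + 1)).1 ⟨v.1, Cn_mono G e (Nat.le_succ n) v.2⟩ = (X n).1 v :=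
    fun n v => hy2 n (X n).1 (X n).2 v
  have hagree : ∀ (n m : ℕ) (h : n ≤ m) (v : ↥(Cn G e n)),
      (X m).1 ⟨v.1, Cn_mono G e h v.2⟩ = (X n).1 v := by
    intro n m h
    induction h with
    | refl => intro v; rfl
    | @step k hk ih =>
        intro v
        exact (hXcompat k ⟨v.1, Cn_mono G e hk v.2⟩).trans (ih v)
  -- build the global solution
  have hvFn : ∀ v : V, v ∈ Fn e ((he v).choose + 1) := fun v =>
    Finset.mem_image.mpr ⟨(he v).choose, Finset.mem_range.mpr (Nat.lt_succ_self _),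
      (he v).choose_spec⟩
  let nv : V → ℕ := fun v => (he v).choose + 1
  let f : V → ℝ := fun v => (X (nv v)).1 ⟨v, Fn_subset_Cn G e (hvFn v)⟩
  have hfX : ∀ (n : ℕ) (v : ↥(Cn G e n)), f v.1 = (X n).1 v := by
    intro n v
    have h2 := hagree (nv v.1) (max n (nv v.1)) (le_max_right _ _)
      ⟨v.1, Fn_subset_Cn G e (hvFn v.1)⟩
    have h3 := hagree n (max n (nv v.1)) (le_max_left _ _) v
    exact h2.symm.trans h3
  refine ⟨f, funext fun v => ?_⟩
  have hvF : v ∈ Fn e (nv v) := hvFn v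
  have hx : (X (nv v)).1 ∈ T (nv v) (max (nv v) (M (nv v))) := by
    rw [hTeq (nv v) _ (le_max_right _ _)]
    exact (X (nv v)).2
  obtain ⟨h, hh, hπ⟩ := hx
  rw [Set.mem_preimage, Set.mem_singleton_iff] at hh
  have hfh : lap G f v = lap G h v := by
    apply lap_congr
    intro w hw
    have hwC : w ∈ Cn G e (nv v) := ball_subset_Cn G e hvF hw
    have h4 := hfX (nv v) ⟨w, hwC⟩
    rw [h4, ← hπ]
    rfl
  rw [hfh]
  exact congrFun hh ⟨v, Fn_mono e (le_max_left _ _) hvF⟩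


lemma countable_of_connected {V : Type*} (G : SimpleGraph V) [G.LocallyFinite]
    (hconn : G.Connected) : Countable V := by
  classical
  obtain ⟨r⟩ := hconn.nonempty
  let ball : ℕ → Finset V := fun n => Nat.rec {r}
    (fun _ B => B.biUnion (fun v => insert v (G.neighborFinset v))) n
  have hsucc : ∀ n, ball (n + 1) = (ball n).biUnion (fun v => insert v (G.neighborFinset v)) :=
    fun n => rfl
  have hmono : ∀ n, ball n ⊆ ball (n + 1) := by
    intro n x hx
    rw [hsucc]
    exact Finset.mem_biUnion.mpr ⟨x, hx, Finset.mem_insert_self _ _⟩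
  have hball : ∀ (n : ℕ) (v : V) (w : G.Walk v r), w.length ≤ n → v ∈ ball n := by
    intro n
    induction n with
    | zero =>
        intro v w hw
        have := SimpleGraph.Walk.eq_of_length_eq_zero (Nat.le_zero.mp hw)
        subst this; simp [ball]
    | succ n ih =>
        intro v w hw
        cases w with
        | nil => exact hmono n (ih r SimpleGraph.Walk.nil (Nat.zero_le _))
        | @cons _ u _ h p =>
            have hu : u ∈ ball n := ih u p (by simpa using Nat.succ_le_succ_iff.mp hw)
            rw [hsucc]
            refine Finset.mem_biUnion.mpr ⟨u, hu, ?_⟩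
            exact Finset.mem_insert.mpr (Or.inr ((SimpleGraph.mem_neighborFinset _ _ _).mpr h.symm))
  have : (Set.univ : Set V).Countable := by
    have hsub : (Set.univ : Set V) ⊆ ⋃ n, {v : V | v ∈ ball n} := by
      intro v _
      obtain ⟨w⟩ := (hconn v r)
      exact Set.mem_iUnion.mpr ⟨w.length, hball _ v w le_rfl⟩
    exact (Set.countable_iUnion (fun n => (ball n).countable_toSet)).mono hsub
  exact Set.countable_univ_iff.mp this

lemma mem_closure_pi_bot {ι X : Type*} (s : Set (ι → X)) (g : ι → X)
    (hg : g ∈ @closure _ (@Pi.topologicalSpace ι (fun _ => X) (fun _ => ⊥)) s)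
    (F : Finset ι) : ∃ f ∈ s, ∀ v ∈ F, f v = g v := by
  letI : TopologicalSpace X := ⊥
  haveI : DiscreteTopology X := ⟨rfl⟩
  have hU : IsOpen ((↑F : Set ι).pi (fun v => {g v})) :=
    isOpen_set_pi F.finite_toSet (fun v _ => isOpen_discrete _)
  have hgU : g ∈ (↑F : Set ι).pi (fun v => {g v}) := fun v _ => rfl
  obtain ⟨f, hf1, hf2⟩ := mem_closure_iff.mp hg _ hU hgU
  exact ⟨f, hf2, fun v hv => hf1 v (by simpa using hv)⟩

theorem stmt6 {V : Type*} (G : SimpleGraph V) [G.LocallyFinite] (hconn : G.Connected) :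
    @IsClosed (V → ℝ) (@Pi.topologicalSpace V (fun _ => ℝ) (fun _ => ⊥))
      (Set.range (lap G)) := by
  classical
  haveI : Countable V := countable_of_connected G hconn
  refine @isClosed_of_closure_subset (V → ℝ) (@Pi.topologicalSpace V (fun _ => ℝ) (fun _ => ⊥)) (Set.range (lap G)) ?_
  intro g hg
  have hloc : ∀ F : Finset V, ∃ f : V → ℝ, ∀ v ∈ F, lap G f v = g v := by
    intro F
    obtain ⟨h, ⟨f, rfl⟩, hh⟩ := mem_closure_pi_bot _ g hg F
    exact ⟨f, hh⟩
  obtain ⟨f, hf⟩ := main_lemma G g hloc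
  exact ⟨f, hf⟩
end

section
/- Let G be a connected locally finite simplicial graph with vertex set V, and let g : V → ℝ. If for every finite subset F ⊆ V there exists f : V → ℝ such that Δ_G(f) agrees with g on F, then there exists f : V → ℝ with Δ_G(f) = g. -/
open SimpleGraph

namespace Stmt7Aux

variable {V : Type*} (G : SimpleGraph V) [G.LocallyFinite]

lemma lap_comb (c : ℝ) (p₁ p₂ p₃ : V → ℝ) (v : V) :
    lap G (c • (p₁ - p₂) + p₃) v = c * (lap G p₁ v - lap G p₂ v) + lap G p₃ v := by
  unfold lap
  simp only [Pi.add_apply, Pi.smul_apply, Pi.sub_apply, smul_eq_mul]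
  rw [Finset.sum_add_distrib, ← Finset.mul_sum, Finset.sum_sub_distrib]
  ring

lemma lap_congr [DecidableEq V] {f f' : V → ℝ} {v : V}
    (hf : ∀ w ∈ insert v (G.neighborFinset v), f w = f' w) :
    lap G f v = lap G f' v := by
  unfold lap
  rw [hf v (Finset.mem_insert_self _ _),
    Finset.sum_congr rfl fun w hw => hf w (Finset.mem_insert_of_mem hw)]

variable (g : V → ℝ)

/-- The affine subspace of functions `f` with `lap G f = g` on `F`. -/
noncomputable def A (F : Finset V) : AffineSubspace ℝ (V → ℝ) where
  carrier := {f | ∀ v ∈ F, lap G f v = g v}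
  smul_vsub_vadd_mem' := by
    intro c p₁ p₂ p₃ h₁ h₂ h₃ v hv
    have hrw : c • (p₁ -ᵥ p₂) +ᵥ p₃ = c • (p₁ - p₂) + p₃ := rfl
    rw [hrw, lap_comb, h₁ v hv, h₂ v hv, h₃ v hv]
    ring

lemma mem_A {F : Finset V} {f : V → ℝ} :
    f ∈ A G g F ↔ ∀ v ∈ F, lap G f v = g v := Iff.rfl

lemma A_anti {F₁ F₂ : Finset V} (hF : F₁ ⊆ F₂) : A G g F₂ ≤ A G g F₁ :=
  fun _f hf v hv => hf v (hF hv)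

/-- Restriction to coordinates in `F`, as an affine map. -/
noncomputable def projA (F : Finset V) : (V → ℝ) →ᵃ[ℝ] (↥F → ℝ) :=
  (LinearMap.funLeft ℝ ℝ (Subtype.val : ↥F → V)).toAffineMap

lemma projA_apply (F : Finset V) (f : V → ℝ) (v : ↥F) : projA F f v = f v := rfl

lemma projMap_mono {E : Type*} [AddCommGroup E] [Module ℝ E]
    (φ : (V → ℝ) →ᵃ[ℝ] E) {s t : AffineSubspace ℝ (V → ℝ)} (hst : s ≤ t) :
    s.map φ ≤ t.map φ := by
  intro x hx
  obtain ⟨a, ha, rfl⟩ := AffineSubspace.mem_map.1 hx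
  exact AffineSubspace.mem_map_of_mem φ (hst ha)

/-- A downward-directed family of nonempty affine subspaces of a finite-dimensional
space has a least element. -/
lemma exists_min {E ι : Type*} [AddCommGroup E] [Module ℝ E] [FiniteDimensional ℝ E]
    [Nonempty ι] (S : ι → AffineSubspace ℝ E)
    (hne : ∀ i, ((S i : Set E)).Nonempty)
    (hdir : ∀ i j, ∃ k, S k ≤ S i ∧ S k ≤ S j) : ∃ i, ∀ j, S i ≤ S j := by
  obtain ⟨i, hi⟩ : ∃ i, Module.finrank ℝ (S i).direction =
      sInf (Set.range fun i => Module.finrank ℝ (S i).direction) :=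
    Nat.sInf_mem (Set.range_nonempty _)
  refine ⟨i, fun j => ?_⟩
  obtain ⟨k, hki, hkj⟩ := hdir i j
  have hdle := AffineSubspace.direction_le hki
  have hrk : Module.finrank ℝ (S i).direction ≤ Module.finrank ℝ (S k).direction := by
    rw [hi]; exact Nat.sInf_le ⟨k, rfl⟩
  have hdeq : (S k).direction = (S i).direction :=
    Submodule.eq_of_le_of_finrank_le hdle hrk
  obtain ⟨x, hx⟩ := hne k
  have heq : S i = S k :=
    (AffineSubspace.eq_iff_direction_eq_of_mem (hki hx) hx).2 hdeq.symm
  exact heq.trans_le hkj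

lemma A_nonempty (h : ∀ F : Finset V, ∃ f : V → ℝ, ∀ v ∈ F, lap G f v = g v)
    (F : Finset V) : ((A G g F : Set (V → ℝ))).Nonempty := by
  obtain ⟨f, hf⟩ := h F
  exact ⟨f, hf⟩

lemma exists_sel [DecidableEq V] (h : ∀ F : Finset V, ∃ f : V → ℝ, ∀ v ∈ F, lap G f v = g v)
    (F : Finset V) : ∃ F₀ : Finset V, F ⊆ F₀ ∧ ∀ F', F ⊆ F' →
      (A G g F₀).map (projA F) ≤ (A G g F').map (projA F) := by
  have hinh : Nonempty {F' : Finset V // F ⊆ F'} := ⟨⟨F, subset_refl F⟩⟩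
  obtain ⟨i, hi⟩ := exists_min (ι := {F' : Finset V // F ⊆ F'})
    (fun F' => (A G g F'.1).map (projA F))
    (fun F' => by
      obtain ⟨f, hf⟩ := A_nonempty G g h F'.1
      exact ⟨projA F f, AffineSubspace.mem_map_of_mem _ hf⟩)
    (fun i j => by
      refine ⟨⟨i.1 ∪ j.1, i.2.trans Finset.subset_union_left⟩, ?_, ?_⟩
      · show (A G g (i.1 ∪ j.1)).map (projA F) ≤ (A G g i.1).map (projA F)
        exact projMap_mono (projA F) (A_anti G g Finset.subset_union_left)
      · show (A G g (i.1 ∪ j.1)).map (projA F) ≤ (A G g j.1).map (projA F)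
        exact projMap_mono (projA F) (A_anti G g Finset.subset_union_right))
  exact ⟨i.1, i.2, fun F' hF' => hi ⟨F', hF'⟩⟩

/-- Exploring the graph by lists of neighbour indices. -/
noncomputable def run : V → List ℕ → V
  | u, [] => u
  | u, k :: l => run ((G.neighborFinset u).toList.getD k u) l

lemma run_walk {u v : V} (p : G.Walk u v) : ∃ l : List ℕ, run G u l = v := by
  induction p with
  | nil => exact ⟨[], rfl⟩
  | @cons u b v hadj p ih =>
    obtain ⟨l, hl⟩ := ih
    have hb : b ∈ (G.neighborFinset u).toList :=
      Finset.mem_toList.2 (by simpa using hadj)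
    obtain ⟨k, hk, hget⟩ := List.getElem_of_mem hb
    refine ⟨k :: l, ?_⟩
    show run G ((G.neighborFinset u).toList.getD k u) l = v
    rw [List.getD_eq_getElem _ _ hk, hget, hl]

lemma exists_surj (hconn : G.Connected) : ∃ e : ℕ → V, Function.Surjective e := by
  have : Nonempty V := hconn.nonempty
  let r := Classical.arbitrary V
  refine ⟨fun n => run G r (Denumerable.ofNat (List ℕ) n), fun v => ?_⟩
  obtain ⟨p⟩ := hconn.preconnected r v
  obtain ⟨l, hl⟩ := run_walk G p
  refine ⟨Encodable.encode l, ?_⟩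
  show run G r (Denumerable.ofNat (List ℕ) (Encodable.encode l)) = v
  rw [Denumerable.ofNat_encode]
  exact hl

end Stmt7Aux

theorem stmt7 {V : Type*} (G : SimpleGraph V) [G.LocallyFinite] (hconn : G.Connected)
    (g : V → ℝ) (h : ∀ F : Finset V, ∃ f : V → ℝ, ∀ v ∈ F, lap G f v = g v) :
    ∃ f : V → ℝ, lap G f = g := by
  classical
  obtain ⟨e, he⟩ := Stmt7Aux.exists_surj G hconn
  set Fn : ℕ → Finset V := fun n => (Finset.range n).image e with hFn
  have hmono : ∀ {m n : ℕ}, m ≤ n → Fn m ⊆ Fn n := fun hmn =>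
    Finset.image_subset_image (Finset.range_subset_range.2 hmn)
  have hcover : ∀ S : Finset V, ∃ n, S ⊆ Fn n := by
    intro S
    refine ⟨S.sup (fun v => (he v).choose + 1), fun v hv => ?_⟩
    exact Finset.mem_image.2 ⟨(he v).choose,
      Finset.mem_range.2 (Nat.lt_of_succ_le (Finset.le_sup (f := fun v => (he v).choose + 1) hv)), (he v).choose_spec⟩
  -- the stable restriction spaces
  have hsel := Stmt7Aux.exists_sel G g h
  set sel : Finset V → Finset V := fun F => (hsel F).choose with hsel_def
  set D : (F : Finset V) → AffineSubspace ℝ (↥F → ℝ) :=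
    fun F => (Stmt7Aux.A G g (sel F)).map (Stmt7Aux.projA F) with hD_def
  have hD_le : ∀ F F' : Finset V, F ⊆ F' → D F ≤ (Stmt7Aux.A G g F').map (Stmt7Aux.projA F) :=
    fun F F' hFF' => (hsel F).choose_spec.2 F' hFF'
  have hD_ne : ∀ F : Finset V, ((D F : Set (↥F → ℝ))).Nonempty := by
    intro F
    obtain ⟨f, hf⟩ := Stmt7Aux.A_nonempty G g h (sel F)
    exact ⟨Stmt7Aux.projA F f, AffineSubspace.mem_map_of_mem _ hf⟩
  -- lifting along inclusions of finite sets
  have hlift : ∀ (F₁ F₂ : Finset V) (hsub : F₁ ⊆ F₂) (x : ↥F₁ → ℝ), x ∈ D F₁ →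
      ∃ y : ↥F₂ → ℝ, y ∈ D F₂ ∧ ∀ v (hv : v ∈ F₁), y ⟨v, hsub hv⟩ = x ⟨v, hv⟩ := by
    intro F₁ F₂ hsub x hx
    have h1 : x ∈ (Stmt7Aux.A G g (sel F₂)).map (Stmt7Aux.projA F₁) :=
      hD_le F₁ (sel F₂) (hsub.trans (hsel F₂).choose_spec.1) hx
    obtain ⟨a, ha, rfl⟩ := AffineSubspace.mem_map.1 h1
    exact ⟨Stmt7Aux.projA F₂ a, AffineSubspace.mem_map_of_mem _ ha, fun v hv => rfl⟩
  choose lift hlift1 hlift2 using hlift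
  -- recursive construction of compatible elements
  let X : (n : ℕ) → {x : (↥(Fn n) → ℝ) // x ∈ D (Fn n)} := fun n =>
    Nat.rec ⟨(hD_ne (Fn 0)).choose, (hD_ne (Fn 0)).choose_spec⟩
      (fun m xm => ⟨lift (Fn m) (Fn (m + 1)) (hmono m.le_succ) xm.1 xm.2,
        hlift1 _ _ _ _ _⟩) n
  have hX_succ : ∀ m v (hv : v ∈ Fn m),
      (X (m + 1)).1 ⟨v, hmono m.le_succ hv⟩ = (X m).1 ⟨v, hv⟩ :=
    fun m v hv => hlift2 (Fn m) (Fn (m + 1)) (hmono m.le_succ) (X m).1 (X m).2 v hv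
  have hX_le : ∀ (m n : ℕ) (hmn : m ≤ n) v (hv : v ∈ Fn m),
      (X n).1 ⟨v, hmono hmn hv⟩ = (X m).1 ⟨v, hv⟩ := by
    intro m n hmn
    induction n, hmn using Nat.le_induction with
    | base => intro v hv; rfl
    | succ n hmn ih =>
      intro v hv
      rw [← ih v hv]
      exact hX_succ n v (hmono hmn hv)
  -- the global function
  have hnv : ∀ v : V, v ∈ Fn ((hcover {v}).choose) := fun v =>
    (hcover {v}).choose_spec (Finset.mem_singleton_self v)
  set f : V → ℝ := fun v => (X ((hcover {v}).choose)).1 ⟨v, hnv v⟩ with hf_def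
  have hf : ∀ (n : ℕ) (v : V) (hv : v ∈ Fn n), f v = (X n).1 ⟨v, hv⟩ := by
    intro n v hv
    have h1 := hX_le ((hcover {v}).choose) (max ((hcover {v}).choose) n)
      (le_max_left _ _) v (hnv v)
    have h2 := hX_le n (max ((hcover {v}).choose) n) (le_max_right _ _) v hv
    exact h1.symm.trans h2
  refine ⟨f, funext fun v => ?_⟩
  obtain ⟨n, hn⟩ := hcover (insert v (G.neighborFinset v))
  have hx : (X n).1 ∈ (Stmt7Aux.A G g (Fn n)).map (Stmt7Aux.projA (Fn n)) :=
    hD_le (Fn n) (Fn n) (subset_refl _) (X n).2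
  obtain ⟨a, ha, haeq⟩ := AffineSubspace.mem_map.1 hx
  have hvF : v ∈ Fn n := hn (Finset.mem_insert_self _ _)
  have hgoal : lap G a v = g v := ha v hvF
  rw [← hgoal]
  apply Stmt7Aux.lap_congr
  intro w hw
  have hwF : w ∈ Fn n := hn hw
  have h1 : f w = (X n).1 ⟨w, hwF⟩ := hf n w hwF
  rw [h1, ← haeq]
  rfl
end

section
/- Let G be an infinite, connected, locally finite simplicial graph with vertex set V. Then the image Δ_G(ℝ^V) is dense in ℝ^V in the prodiscrete topology: for every g : V → ℝ and every finite F ⊆ V there exists f : V → ℝ such that Δ_G(f) agrees with g on F. -/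
open SimpleGraph

private lemma degree_pos' {V : Type*} [Infinite V] (G : SimpleGraph V) [G.LocallyFinite]
    (hconn : G.Connected) (v : V) : 0 < G.degree v := by
  rw [SimpleGraph.degree_pos_iff_exists_adj]
  obtain ⟨w, hw⟩ := exists_ne v
  obtain ⟨p⟩ := hconn.preconnected v w
  cases p with
  | nil => exact absurd rfl hw
  | cons h q => exact ⟨_, h⟩

private lemma mem_of_walk {V : Type*} (G : SimpleGraph V) (A : Set V)
    (hA : ∀ u ∈ A, ∀ w, G.Adj u w → w ∈ A) :
    ∀ {a u : V}, G.Walk a u → a ∈ A → u ∈ A := by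
  intro a u p
  induction p with
  | nil => exact id
  | cons h q ih => intro ha; exact ih (hA _ ha _ h)

private lemma maxaux {V : Type*} [Infinite V] (G : SimpleGraph V) [G.LocallyFinite]
    (hconn : G.Connected) (F : Finset V) (μ : V → ℝ)
    (hsupp : ∀ v, v ∉ F → μ v = 0)
    (heq : ∀ u, μ u = ∑ w ∈ G.neighborFinset u, μ w / (G.degree w : ℝ))
    (v : V)
    (hmax : ∀ w, μ w / (G.degree w : ℝ) ≤ μ v / (G.degree v : ℝ))
    (hpos : 0 < μ v / (G.degree v : ℝ)) : False := by
  set m : ℝ := μ v / (G.degree v : ℝ) with hm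
  set A : Set V := {u | μ u / (G.degree u : ℝ) = m} with hA
  have hclosed : ∀ u ∈ A, ∀ w, G.Adj u w → w ∈ A := by
    intro u hu w hw
    have hdeg : (0 : ℝ) < (G.degree u : ℝ) := by
      exact_mod_cast degree_pos' G hconn u
    have huA : μ u / (G.degree u : ℝ) = m := hu
    have hμu : μ u = (G.degree u : ℝ) * m := by
      field_simp at huA; linarith [huA]
    have hsum : ∑ x ∈ G.neighborFinset u, μ x / (G.degree x : ℝ)
        = ∑ _x ∈ G.neighborFinset u, m := by
      rw [← heq u, Finset.sum_const, SimpleGraph.card_neighborFinset_eq_degree, hμu,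
        nsmul_eq_mul, mul_comm]
    have hall := (Finset.sum_eq_sum_iff_of_le (fun x _ => hmax x)).mp hsum
    exact hall w ((G.mem_neighborFinset u w).mpr hw)
  have hvA : v ∈ A := rfl
  obtain ⟨u, hu⟩ := Infinite.exists_notMem_finset F
  have huA : u ∈ A := by
    obtain ⟨p⟩ := hconn.preconnected v u
    exact mem_of_walk G A hclosed p hvA
  have h0 : μ u = 0 := hsupp u hu
  have : μ u / (G.degree u : ℝ) = m := huA
  rw [h0, zero_div] at this
  linarith

private lemma maxprinciple {V : Type*} [Infinite V] (G : SimpleGraph V) [G.LocallyFinite]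
    (hconn : G.Connected) (F : Finset V) (μ : V → ℝ)
    (hsupp : ∀ v, v ∉ F → μ v = 0)
    (heq : ∀ u, μ u = ∑ w ∈ G.neighborFinset u, μ w / (G.degree w : ℝ)) :
    μ = 0 := by
  by_contra h
  obtain ⟨u0, hu0⟩ := Function.ne_iff.mp h
  simp only [Pi.zero_apply] at hu0
  have hu0F : u0 ∈ F := by
    by_contra hc
    exact hu0 (hsupp u0 hc)
  obtain ⟨v, hvF, hv⟩ := Finset.exists_max_image F
    (fun w => |μ w / (G.degree w : ℝ)|) ⟨u0, hu0F⟩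
  have hdegu0 : (0 : ℝ) < (G.degree u0 : ℝ) := by
    exact_mod_cast degree_pos' G hconn u0
  have hνu0 : μ u0 / (G.degree u0 : ℝ) ≠ 0 := div_ne_zero hu0 (ne_of_gt hdegu0)
  have hνvpos : 0 < |μ v / (G.degree v : ℝ)| :=
    lt_of_lt_of_le (abs_pos.mpr hνu0) (hv u0 hu0F)
  have hmaxall : ∀ w, |μ w / (G.degree w : ℝ)| ≤ |μ v / (G.degree v : ℝ)| := by
    intro w
    by_cases hw : w ∈ F
    · exact hv w hw
    · rw [hsupp w hw, zero_div, abs_zero]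
      exact le_of_lt hνvpos
  rcases lt_trichotomy (μ v / (G.degree v : ℝ)) 0 with hlt | heq0 | hgt
  · -- apply maxaux to -μ
    refine maxaux G hconn F (-μ) (fun w hw => by simp [hsupp w hw]) ?_ v ?_ ?_
    · intro u
      simp only [Pi.neg_apply, neg_div, Finset.sum_neg_distrib, neg_inj]
      exact heq u
    · intro w
      simp only [Pi.neg_apply, neg_div]
      have h1 : -(|μ v / (G.degree v : ℝ)|) ≤ μ w / (G.degree w : ℝ) :=
        neg_abs_le _ |>.trans' (by linarith [neg_le_neg (hmaxall w), neg_abs_le (μ w / (G.degree w : ℝ))])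
      have h2 : |μ v / (G.degree v : ℝ)| = -(μ v / (G.degree v : ℝ)) := abs_of_neg hlt
      linarith [neg_abs_le (μ w / (G.degree w : ℝ)), hmaxall w]
    · simp only [Pi.neg_apply, neg_div]
      linarith
  · rw [heq0, abs_zero] at hνvpos; linarith
  · refine maxaux G hconn F μ hsupp heq v ?_ hgt
    intro w
    have := hmaxall w
    have h2 : |μ v / (G.degree v : ℝ)| = μ v / (G.degree v : ℝ) := abs_of_pos hgt
    linarith [le_abs_self (μ w / (G.degree w : ℝ))]

theorem stmt11 {V : Type*} [Infinite V] (G : SimpleGraph V) [G.LocallyFinite]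
    (hconn : G.Connected) :
    ∀ (g : V → ℝ) (F : Finset V), ∃ f : V → ℝ, ∀ v ∈ F, lap G f v = g v := by
  classical
  intro g F
  let T : (V → ℝ) →ₗ[ℝ] (F → ℝ) :=
    { toFun := fun f i => lap G f i
      map_add' := by
        intro f₁ f₂
        funext i
        simp only [lap, Pi.add_apply, Finset.sum_add_distrib]
        ring
      map_smul' := by
        intro c f
        funext i
        simp only [lap, Pi.smul_apply, smul_eq_mul, RingHom.id_apply, ← Finset.mul_sum]
        ring }
  have hsurj : Function.Surjective T := by
    rw [← LinearMap.dualMap_injective_iff]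
    rw [← LinearMap.ker_eq_bot, LinearMap.ker_eq_bot']
    intro φ hφ
    have hzero : ∀ f : V → ℝ, φ (T f) = 0 := by
      intro f
      have : T.dualMap φ f = (0 : Module.Dual ℝ (V → ℝ)) f := by rw [hφ]
      simpa using this
    set μ : V → ℝ := fun v =>
      if h : v ∈ F then φ (fun j : F => if (⟨v, h⟩ : F) = j then 1 else 0) else 0 with hμdef
    have hsupp : ∀ v, v ∉ F → μ v = 0 := fun v hv => dif_neg hv
    have hrepr : ∀ x : F → ℝ, φ x = ∑ i : F, x i * μ (i : V) := by
      intro x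
      rw [LinearMap.pi_apply_eq_sum_univ φ x]
      refine Finset.sum_congr rfl fun i _ => ?_
      rw [smul_eq_mul]
      have hv : μ (↑i : V) = φ (fun j => if i = j then 1 else 0) := dif_pos i.2
      rw [hv]
    -- key equation for μ
    have heq : ∀ u, μ u = ∑ w ∈ G.neighborFinset u, μ w / (G.degree w : ℝ) := by
      intro u
      have h0 := hzero (fun x => if x = u then 1 else 0)
      rw [hrepr] at h0
      have hcoe : ∑ i : F, (T fun x => if x = u then 1 else 0) i * μ (i : V)
          = ∑ v ∈ F, lap G (fun x => if x = u then 1 else 0) v * μ v := by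
        rw [← Finset.sum_coe_sort F (fun v => lap G (fun x => if x = u then 1 else 0) v * μ v)]
        rfl
      rw [hcoe] at h0
      have hlap : ∀ v : V, lap G (fun x => if x = u then 1 else 0) v
          = (if v = u then 1 else 0) - (if v ∈ G.neighborFinset u then 1 / (G.degree v : ℝ) else 0) := by
        intro v
        simp only [lap]
        have hs : ∑ w ∈ G.neighborFinset v, (if w = u then (1:ℝ) else 0)
            = if u ∈ G.neighborFinset v then 1 else 0 := by
          rw [Finset.sum_ite_eq' (G.neighborFinset v) u (fun _ => (1:ℝ))]
        rw [hs]
        by_cases h : G.Adj u v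
        · simp [SimpleGraph.mem_neighborFinset, h, h.symm]
        · have h' : ¬ G.Adj v u := fun hh => h hh.symm
          simp [SimpleGraph.mem_neighborFinset, h, h']
      have h1 : ∑ v ∈ F, lap G (fun x => if x = u then 1 else 0) v * μ v
          = (∑ v ∈ F, (if v = u then μ v else 0))
            - ∑ v ∈ F, (if v ∈ G.neighborFinset u then μ v / (G.degree v : ℝ) else 0) := by
        rw [← Finset.sum_sub_distrib]
        refine Finset.sum_congr rfl fun v _ => ?_
        rw [hlap v, sub_mul, ite_mul, ite_mul, one_mul, zero_mul]
        congr 1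
        by_cases hv : v ∈ G.neighborFinset u
        · simp only [if_pos hv]; ring
        · simp [hv]
      rw [h1] at h0
      have h2 : ∑ v ∈ F, (if v = u then μ v else 0) = μ u := by
        rw [Finset.sum_ite_eq' F u (fun v => μ v)]
        by_cases hu : u ∈ F
        · simp [hu]
        · simp [hu, hsupp u hu]
      have h3 : ∑ v ∈ F, (if v ∈ G.neighborFinset u then μ v / (G.degree v : ℝ) else 0)
          = ∑ w ∈ G.neighborFinset u, μ w / (G.degree w : ℝ) := by
        rw [Finset.sum_ite_mem]
        rw [show ∑ w ∈ G.neighborFinset u, μ w / (G.degree w : ℝ)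
            = ∑ w ∈ G.neighborFinset u, (if w ∈ F then μ w / (G.degree w : ℝ) else 0) from ?_]
        · rw [Finset.sum_ite_mem, Finset.inter_comm]
        · refine Finset.sum_congr rfl fun w _ => ?_
          by_cases hw : w ∈ F
          · simp [hw]
          · simp [hw, hsupp w hw]
      rw [h2, h3] at h0
      linarith
    have hμ0 : μ = 0 := maxprinciple G hconn F μ hsupp heq
    refine LinearMap.ext fun x => ?_
    rw [hrepr x, hμ0]
    simp
  obtain ⟨f, hf⟩ := hsurj (fun i : F => g i)
  refine ⟨f, fun v hv => ?_⟩
  have := congrFun hf ⟨v, hv⟩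
  exact this
end
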